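/- Let P, P_G, P_C be probability distributions on a finite set and define the GAN objective L(D) = E_{ω~P} D(ω) - (1/2) E_{ω~P_G} D(ω) - (1/2) E_{ω~P_C} D(ω) over functions D: Ω → [-1,1]. Then min over (P_G, P_C) of max_D L(D) equals 0 and is achieved exactly when P = (P_G + P_C)/2. -/
import Mathlib


/-- For the GAN objective L(D) = E_P D - (1/2) E_{P_G} D - (1/2) E_{P_C} D over
discriminators D : Ω → [-1,1], the value max_D L(D) is always nonnegative, and it
equals 0 (its minimum over pairs (P_G, P_C)) exactly when P = (P_G + P_C)/2. -/
theorem stmt_9 {Ω : Type*} [Fintype Ω]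
    (P : Ω → ℝ) (hP : ∀ ω, 0 ≤ P ω) (hPsum : ∑ ω, P ω = 1) :
    ∀ PG PC : Ω → ℝ,
      (∀ ω, 0 ≤ PG ω) → (∑ ω, PG ω = 1) →
      (∀ ω, 0 ≤ PC ω) → (∑ ω, PC ω = 1) →
      (0 ≤ sSup {v : ℝ | ∃ D : Ω → ℝ, (∀ ω, |D ω| ≤ 1) ∧
          v = (∑ ω, P ω * D ω) - (1/2) * (∑ ω, PG ω * D ω)
                - (1/2) * (∑ ω, PC ω * D ω)}) ∧
      (sSup {v : ℝ | ∃ D : Ω → ℝ, (∀ ω, |D ω| ≤ 1) ∧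
          v = (∑ ω, P ω * D ω) - (1/2) * (∑ ω, PG ω * D ω)
                - (1/2) * (∑ ω, PC ω * D ω)} = 0 ↔
        ∀ ω, P ω = (PG ω + PC ω) / 2) := by
  intro PG PC hG hGs hC hCs
  set Q : Ω → ℝ := fun ω => P ω - (PG ω + PC ω) / 2 with hQ
  set S : Set ℝ := {v : ℝ | ∃ D : Ω → ℝ, (∀ ω, |D ω| ≤ 1) ∧
        v = (∑ ω, P ω * D ω) - (1/2) * (∑ ω, PG ω * D ω)
              - (1/2) * (∑ ω, PC ω * D ω)} with hS
  have hval : ∀ D : Ω → ℝ,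
      (∑ ω, P ω * D ω) - (1/2) * (∑ ω, PG ω * D ω) - (1/2) * (∑ ω, PC ω * D ω)
        = ∑ ω, Q ω * D ω := by
    intro D
    rw [Finset.mul_sum, Finset.mul_sum, ← Finset.sum_sub_distrib,
      ← Finset.sum_sub_distrib]
    exact Finset.sum_congr rfl fun ω _ => by simp [hQ]; ring
  have h0 : (0 : ℝ) ∈ S := ⟨fun _ => 0, fun ω => by simp, by simp⟩
  have hbdd : BddAbove S := by
    refine ⟨2, fun v hv => ?_⟩
    obtain ⟨D, hD, rfl⟩ := hv
    rw [hval]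
    calc ∑ ω, Q ω * D ω ≤ ∑ ω, (P ω + (PG ω + PC ω) / 2) := by
          refine Finset.sum_le_sum fun ω _ => ?_
          calc Q ω * D ω ≤ |Q ω * D ω| := le_abs_self _
            _ = |Q ω| * |D ω| := abs_mul _ _
            _ ≤ |Q ω| * 1 := by
                exact mul_le_mul_of_nonneg_left (hD ω) (abs_nonneg _)
            _ = |Q ω| := mul_one _
            _ ≤ P ω + (PG ω + PC ω) / 2 := by
                rw [abs_le]
                constructor <;> simp [hQ] <;> nlinarith [hP ω, hG ω, hC ω]
      _ = 2 := by
          rw [Finset.sum_add_distrib, hPsum, ← Finset.sum_div,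
            Finset.sum_add_distrib, hGs, hCs]
          norm_num
  have hge : 0 ≤ sSup S := le_csSup hbdd h0
  refine ⟨hge, ?_, ?_⟩
  · -- sSup = 0 → P = (PG+PC)/2
    intro h ω
    set D : Ω → ℝ := fun ω => if 0 ≤ Q ω then 1 else -1 with hD
    have hDb : ∀ ω, |D ω| ≤ 1 := by
      intro ω; by_cases h' : 0 ≤ Q ω <;> simp [hD, h']
    have hmem : (∑ ω, |Q ω|) ∈ S := by
      refine ⟨D, hDb, ?_⟩
      rw [hval]
      refine (Finset.sum_congr rfl fun ω _ => ?_).symm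
      by_cases h' : 0 ≤ Q ω
      · simp [hD, h', abs_of_nonneg h']
      · simp [hD, h', abs_of_neg (lt_of_not_ge h')]
    have : (∑ ω, |Q ω|) ≤ 0 := h ▸ le_csSup hbdd hmem
    have hz : ∀ ω ∈ Finset.univ, |Q ω| = 0 := by
      rw [← Finset.sum_eq_zero_iff_of_nonneg fun ω _ => abs_nonneg (Q ω)]
      exact le_antisymm this (Finset.sum_nonneg fun ω _ => abs_nonneg _)
    have := abs_eq_zero.mp (hz ω (Finset.mem_univ ω))
    simp [hQ] at this
    linarith
  · -- P = (PG+PC)/2 → sSup = 0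
    intro h
    refine le_antisymm (csSup_le ⟨0, h0⟩ ?_) hge
    rintro v ⟨D, hD, rfl⟩
    rw [hval]
    have : ∀ ω, Q ω = 0 := fun ω => by simp [hQ, h ω]
    simp [this]
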